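/- Let Σ be a finite alphabet, S a commutative semiring, M an S-semimodule of finite length, and μ : Σ* → End(M) a monoid homomorphism into the monoid of S-linear endomorphisms of M under composition. Then every word w ∈ Σ* that is a quasipower of order ℓ(M) + 1 contains a subword x ≠ ε such that μ(x) is pseudoregular. -/

import Mathlib

/-- The length of an `S`-semimodule `M`: the supremum of all `r : ℕ` such that there exists a
strictly increasing chain `M₀ ⊊ M₁ ⊊ ⋯ ⊊ M_r` of subsemimodules (i.e. `S`-submodules) of `M`. -/
noncomputable def semimoduleLength (S M : Type*) [Semiring S] [AddCommMonoid M]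
    [Module S M] : ℕ∞ :=
  ⨆ r : {r : ℕ // ∃ c : Fin (r + 1) → Submodule S M, StrictMono c}, ((r : ℕ) : ℕ∞)


/-- A word is a quasipower of order `0` if it is nonempty; it is a quasipower of order
`n + 1` if it has the form `u * v * u` where `u` is a quasipower of order `n`. -/
def IsQuasipower {A : Type*} : ℕ → FreeMonoid A → Prop
  | 0, w => w ≠ 1
  | n + 1, w => ∃ u v : FreeMonoid A, IsQuasipower n u ∧ w = u * v * u

lemma quasipower_ne_one {A : Type*} : ∀ (n : ℕ) (w : FreeMonoid A), IsQuasipower n w → w ≠ 1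
  | 0, _, hw => hw
  | n + 1, _, ⟨u, v, hu, rfl⟩ => by
    have h1 : u ≠ 1 := quasipower_ne_one n u hu
    intro h
    apply h1
    have := congrArg FreeMonoid.toList h
    simp at this
    exact FreeMonoid.toList.injective (by simp [this.1])

lemma pseudoregular_of_range_eq {S M : Type*} [CommSemiring S] [AddCommMonoid M] [Module S M]
    (a b : Module.End S M) (h : LinearMap.range (a * b * a) = LinearMap.range a) :
    LinearMap.range (a * b) = LinearMap.range ((a * b) ∘ₗ (a * b)) := by
  have h1 : LinearMap.range (a * b) ≤ LinearMap.range a := by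
    rw [Module.End.mul_eq_comp]
    exact LinearMap.range_comp_le_range b a
  have h2 : LinearMap.range a ≤ LinearMap.range (a * b) := by
    rw [← h, show a * b * a = (a * b) ∘ₗ a from rfl, LinearMap.range_comp]
    exact LinearMap.map_le_range
  have heq : LinearMap.range (a * b) = LinearMap.range a := le_antisymm h1 h2
  calc LinearMap.range (a * b) = LinearMap.range a := heq
    _ = LinearMap.range ((a * b) ∘ₗ a) := by
        rw [show (a * b) ∘ₗ a = a * b * a from rfl, h]
    _ = Submodule.map (a * b) (LinearMap.range a) := LinearMap.range_comp _ _
    _ = Submodule.map (a * b) (LinearMap.range (a * b)) := by rw [heq]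
    _ = LinearMap.range ((a * b) ∘ₗ (a * b)) := (LinearMap.range_comp _ _).symm

lemma key_lemma {A : Type*} {S M : Type*}
    [CommSemiring S] [AddCommMonoid M] [Module S M]
    (μ : FreeMonoid A →* Module.End S M) :
    ∀ (n : ℕ) (w : FreeMonoid A), IsQuasipower n w →
      (∃ u x v : FreeMonoid A, w = u * x * v ∧ x ≠ 1 ∧
        LinearMap.range (μ x) = LinearMap.range (μ x ∘ₗ μ x)) ∨
      (∃ c : Fin (n + 1) → Submodule S M, StrictMono c ∧
        c 0 = LinearMap.range (μ w)) := by
  intro n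
  induction n with
  | zero =>
    intro w _
    refine Or.inr ⟨fun _ => LinearMap.range (μ w), fun i j hij => ?_, rfl⟩
    have hi := i.isLt
    have hj := j.isLt
    have : i = j := Fin.ext (by omega)
    exact absurd this hij.ne
  | succ n ih =>
    rintro _ ⟨u, v, hu, rfl⟩
    rcases ih u hu with ⟨p, x, q, hpq, hx, hr⟩ | ⟨c, hc, hc0⟩
    · left
      exact ⟨p, x, q * v * u, by rw [hpq]; simp [mul_assoc], hx, hr⟩
    · have hmuw : μ (u * v * u) = μ u * μ v * μ u := by simp
      have hle : LinearMap.range (μ (u * v * u)) ≤ c 0 := by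
        rw [hc0, hmuw, mul_assoc, Module.End.mul_eq_comp]
        exact LinearMap.range_comp_le_range _ _
      rcases eq_or_lt_of_le hle with heq | hlt
      · left
        refine ⟨1, u * v, u, by simp [mul_assoc], ?_, ?_⟩
        · intro h
          apply quasipower_ne_one n u hu
          have := congrArg FreeMonoid.toList h
          simp at this
          exact FreeMonoid.toList.injective (by simp [this.1])
        · have := pseudoregular_of_range_eq (μ u) (μ v) (by rw [← hmuw, heq, hc0])
          simpa using this
      · right
        refine ⟨Fin.cases (LinearMap.range (μ (u * v * u))) c, ?_, by simp⟩
        rw [Fin.strictMono_iff_lt_succ]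
        intro i
        induction i using Fin.cases with
        | zero => rw [Fin.cases_succ]; simpa using hlt
        | succ j =>
          rw [← Fin.succ_castSucc]
          simpa using hc (Fin.castSucc_lt_succ (i := j))

/-- If `M` is a finite-length semimodule and `μ : Σ* → End(M)` a monoid homomorphism, then
every quasipower `w` of order `ℓ(M) + 1` contains a nonempty subword `x` with `μ(x)`
pseudoregular (`im μ(x) = im μ(x)²`). -/
theorem quasipower_contains_pseudoregular {A : Type*} [Fintype A] {S M : Type*}
    [CommSemiring S] [AddCommMonoid M] [Module S M]
    (hM : semimoduleLength S M ≠ ⊤)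
    (μ : FreeMonoid A →* Module.End S M) (w : FreeMonoid A)
    (hw : IsQuasipower ((semimoduleLength S M).toNat + 1) w) :
    ∃ u x v : FreeMonoid A, w = u * x * v ∧ x ≠ 1 ∧
      LinearMap.range (μ x) = LinearMap.range (μ x ∘ₗ μ x) := by
  rcases key_lemma μ _ w hw with h | ⟨d, hd, _⟩
  · exact h
  · exfalso
    have hle : (((semimoduleLength S M).toNat + 1 : ℕ) : ℕ∞) ≤ semimoduleLength S M :=
      le_iSup (fun r : {r : ℕ // ∃ c : Fin (r + 1) → Submodule S M, StrictMono c} =>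
        ((r : ℕ) : ℕ∞)) ⟨(semimoduleLength S M).toNat + 1, d, hd⟩
    exact absurd (Nat.cast_le.mp
      (hle.trans_eq (ENat.coe_toNat_eq_self.mpr hM).symm)) (by omega)
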